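/- Let G = (V, E) be a hypergraph, T ⊆ V a set of terminals, r ∈ T, and s ∈ V − T. Let H be a hypergraph obtained from G by a single h-trim operation at s on a hyperedge e ∈ E with s ∈ e and |e| ≥ 2 (i.e., replacing e by e − {s}). If H has an orientation (an assignment of a head vertex head(e') ∈ e' to each hyperedge e') that is Steiner rooted k-hyperarc-connected with respect to (T, r), then G also has an orientation that is Steiner rooted k-hyperarc-connected with respect to (T, r). -/
import Mathlib


/-- `IsDipath edge head t r as`: the arcs `as`, traversed in order, form a directed
path from `t` to `r`; at each step the current vertex is a tail of the arc (belongs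
to the hyperedge but is not its head), and we move to the head of the arc. -/
def IsDipath {V ι : Type*} [DecidableEq V] (edge : ι → Finset V) (head : ι → V) :
    V → V → List ι → Prop
  | t, r, [] => t = r
  | t, r, a :: as => t ∈ edge a ∧ t ≠ head a ∧ IsDipath edge head (head a) r as

/-- The orientation `head` of the hypergraph `(E, edge)` is Steiner rooted
`k`-hyperarc-connected w.r.t. terminals `T` and root `r`: for every terminal
`t ≠ r` there are `k` pairwise hyperarc-disjoint paths from `t` to `r`, each with
distinct vertices and hyperarcs. -/
def SteinerRootedConnected {V ι : Type*} [DecidableEq V] [DecidableEq ι]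
    (E : Finset ι) (edge : ι → Finset V) (head : ι → V)
    (T : Finset V) (r : V) (k : ℕ) : Prop :=
  ∀ t ∈ T.erase r, ∃ P : Fin k → List ι,
    (∀ j, (∀ a ∈ P j, a ∈ E) ∧ IsDipath edge head t r (P j) ∧
      (P j).Nodup ∧ (t :: (P j).map head).Nodup) ∧
    (∀ j j' : Fin k, j ≠ j' → ∀ a ∈ P j, a ∉ P j')

/-- Lifting a Steiner rooted `k`-hyperarc-connected orientation through an h-trim
operation at a Steiner vertex `s`: if the trimmed hypergraph (where the hyperedge
`edge i₀` is replaced by `edge i₀ − {s}`) has such an orientation, so does the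
original hypergraph. -/
theorem lift_orientation_through_trim {V ι : Type*} [Fintype V] [DecidableEq V]
    [DecidableEq ι]
    (E : Finset ι) (edge : ι → Finset V) (T : Finset V) (r s : V) (k : ℕ)
    (hr : r ∈ T) (hs : s ∉ T)
    (i₀ : ι) (hi₀ : i₀ ∈ E) (hsi₀ : s ∈ edge i₀) (hcard : 2 ≤ (edge i₀).card)
    (headH : ι → V)
    (hheadH : ∀ i ∈ E, headH i ∈ Function.update edge i₀ (edge i₀ \ {s}) i)
    (hH : SteinerRootedConnected E (Function.update edge i₀ (edge i₀ \ {s})) headH T r k) :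
    ∃ headG : ι → V, (∀ i ∈ E, headG i ∈ edge i) ∧
      SteinerRootedConnected E edge headG T r k := by
  have hsub : ∀ a t, t ∈ Function.update edge i₀ (edge i₀ \ {s}) a → t ∈ edge a := by
    intro a t ht
    by_cases h : a = i₀
    · subst h; rw [Function.update_self] at ht; exact (Finset.mem_sdiff.mp ht).1
    · rwa [Function.update_of_ne h] at ht
  have hpath : ∀ (as : List ι) (t : V),
      IsDipath (Function.update edge i₀ (edge i₀ \ {s})) headH t r as →
      IsDipath edge headH t r as := by
    intro as
    induction as with
    | nil => intro t h; exact h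
    | cons a as ih =>
      intro t h
      exact ⟨hsub a t h.1, h.2.1, ih _ h.2.2⟩
  refine ⟨headH, fun i hi => hsub i _ (hheadH i hi), ?_⟩
  intro t ht
  obtain ⟨P, hP1, hP2⟩ := hH t ht
  refine ⟨P, fun j => ?_, hP2⟩
  obtain ⟨h1, h2, h3, h4⟩ := hP1 j
  exact ⟨h1, hpath _ _ h2, h3, h4⟩
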